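/- Let Γ be a cancellation monoid with neutral element e, A a Γ-graded local ring, and P a finitely generated Γ-graded A-module which is projective as an (ungraded) A-module. Then P is a free A-module; indeed, any minimal homogeneous generating set Ω = {ξ₁, …, ξ_s} of P is a free A-basis of P. -/

import Mathlib

section

variable {Γ : Type*} [AddCancelMonoid Γ] [DecidableEq Γ]
variable {A : Type*} [Ring A] (𝒜 : Γ → AddSubgroup A) [GradedRing 𝒜]

/-- The maximal graded ideal of a `Γ`-graded local ring: the two-sided ideal generated by
all non-invertible homogeneous elements. -/
def maximalGradedIdeal : TwoSidedIdeal A :=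
  TwoSidedIdeal.span {a : A | (a ≠ 0 ∧ ∃ γ : Γ, a ∈ 𝒜 γ) ∧ ¬IsUnit a}

end

open DirectSum
section
variable {Γ : Type*} [AddCancelMonoid Γ] [DecidableEq Γ]
variable {A : Type*} [Ring A] (𝒜 : Γ → AddSubgroup A) [GradedRing 𝒜]

open Classical in
/-- The component of `m` in degree `α` where `α + β = τ`, or `0` if no such degree exists. -/
noncomputable def hcomp (β τ : Γ) (m : A) : A :=
  if h : ∃ α : Γ, α + β = τ then (DirectSum.decompose 𝒜 m h.choose : A) else 0

variable {𝒜}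

lemma hcomp_zero (β τ : Γ) : hcomp 𝒜 β τ 0 = 0 := by
  unfold hcomp; split <;> simp

lemma hcomp_add (β τ : Γ) (m m' : A) :
    hcomp 𝒜 β τ (m + m') = hcomp 𝒜 β τ m + hcomp 𝒜 β τ m' := by
  unfold hcomp; split
  · rw [DirectSum.decompose_add, DirectSum.add_apply, AddSubgroup.coe_add]
  · simp

lemma hcomp_eq_decompose {α β τ : Γ} (h : α + β = τ) (m : A) :
    hcomp 𝒜 β τ m = (DirectSum.decompose 𝒜 m α : A) := by
  have hx : ∃ α : Γ, α + β = τ := ⟨α, h⟩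
  unfold hcomp
  rw [dif_pos hx]
  have h2 : hx.choose + β = τ := hx.choose_spec
  have h3 : hx.choose = α := add_right_cancel (h2.trans h.symm)
  rw [h3]

lemma hcomp_of_not_exists {β τ : Γ} (h : ¬ ∃ α : Γ, α + β = τ) (m : A) :
    hcomp 𝒜 β τ m = 0 := dif_neg h

lemma hcomp_sum {ι : Type*} [DecidableEq ι] (β τ : Γ) (t : Finset ι) (g : ι → A) :
    hcomp 𝒜 β τ (∑ x ∈ t, g x) = ∑ x ∈ t, hcomp 𝒜 β τ (g x) := by
  induction t using Finset.induction with
  | empty => simp [hcomp_zero]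
  | insert _ _ hx ih => rw [Finset.sum_insert hx, Finset.sum_insert hx, hcomp_add, ih]

lemma hcomp_mem (β τ : Γ) (m : A) : ∃ γ : Γ, hcomp 𝒜 β τ m ∈ 𝒜 γ := by
  unfold hcomp; split
  · exact ⟨_, SetLike.coe_mem _⟩
  · exact ⟨0, zero_mem _⟩

end

section
variable {Γ : Type*} [AddCancelMonoid Γ] [DecidableEq Γ]
variable {A : Type*} [Ring A] {𝒜 : Γ → AddSubgroup A} [GradedRing 𝒜]
variable {M : Type*} [AddCommGroup M] [Module A M] {𝓜 : Γ → AddSubgroup M}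
  [SetLike.GradedSMul 𝒜 𝓜] [DirectSum.Decomposition 𝓜]

/-- Key lemma: the `τ`-component of `m • p`, for `p` homogeneous of degree `β`. -/
lemma decompose_smul_eq_hcomp_smul (m : A) {β : Γ} {p : M} (hp : p ∈ 𝓜 β) (τ : Γ) :
    (DirectSum.decompose 𝓜 (m • p) τ : M) = hcomp 𝒜 β τ m • p := by
  induction m using DirectSum.Decomposition.inductionOn 𝒜 with
  | zero => rw [zero_smul, hcomp_zero, DirectSum.decompose_zero, zero_smul]; rfl
  | @homogeneous α₀ m =>
      have hmem : (m : A) • p ∈ 𝓜 (α₀ + β) := SetLike.GradedSMul.smul_mem m.2 hp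
      by_cases hτ : τ = α₀ + β
      · subst hτ
        rw [DirectSum.decompose_of_mem_same 𝓜 hmem,
          hcomp_eq_decompose (rfl : α₀ + β = α₀ + β),
          DirectSum.decompose_of_mem_same 𝒜 m.2]
      · rw [DirectSum.decompose_of_mem_ne 𝓜 hmem (Ne.symm hτ)]
        by_cases hex : ∃ α : Γ, α + β = τ
        · obtain ⟨α, hα⟩ := hex
          rw [hcomp_eq_decompose hα,
            DirectSum.decompose_of_mem_ne 𝒜 m.2 (fun hc => hτ (by rw [← hα, hc])),
            zero_smul]
        · rw [hcomp_of_not_exists hex, zero_smul]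
  | add m m' hm hm' =>
      rw [add_smul, DirectSum.decompose_add, hcomp_add, add_smul,
        DirectSum.add_apply, AddSubgroup.coe_add, hm, hm']

/-- Multiplication version, for the ring itself. -/
lemma decompose_mul_eq_hcomp_mul (m : A) {β : Γ} {y : A} (hy : y ∈ 𝒜 β) (τ : Γ) :
    (DirectSum.decompose 𝒜 (m * y) τ : A) = hcomp 𝒜 β τ m * y :=
  decompose_smul_eq_hcomp_smul (𝓜 := 𝒜) m hy τ

open Classical in
/-- The component of `m` in degree `β` where `α + β = τ`, or `0`. -/
noncomputable def hcompL (𝒜 : Γ → AddSubgroup A) [GradedRing 𝒜] (α τ : Γ) (m : A) : A :=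
  if h : ∃ β : Γ, α + β = τ then (DirectSum.decompose 𝒜 m h.choose : A) else 0

lemma hcompL_eq_decompose {α β τ : Γ} (h : α + β = τ) (m : A) :
    hcompL 𝒜 α τ m = (DirectSum.decompose 𝒜 m β : A) := by
  have hx : ∃ β : Γ, α + β = τ := ⟨β, h⟩
  unfold hcompL
  rw [dif_pos hx, show hx.choose = β from add_left_cancel (hx.choose_spec.trans h.symm)]

/-- Left multiplication by a homogeneous element. -/
lemma decompose_homog_mul {α : Γ} {y : A} (hy : y ∈ 𝒜 α) (m : A) (τ : Γ) :
    (DirectSum.decompose 𝒜 (y * m) τ : A) = y * hcompL 𝒜 α τ m := by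
  induction m using DirectSum.Decomposition.inductionOn 𝒜 with
  | zero =>
      rw [mul_zero, DirectSum.decompose_zero]
      unfold hcompL; split <;> simp
  | @homogeneous β₀ m =>
      have hmem : y * (m : A) ∈ 𝒜 (α + β₀) := SetLike.mul_mem_graded hy m.2
      by_cases hτ : τ = α + β₀
      · subst hτ
        rw [DirectSum.decompose_of_mem_same 𝒜 hmem, hcompL_eq_decompose rfl,
          DirectSum.decompose_of_mem_same 𝒜 m.2]
      · rw [DirectSum.decompose_of_mem_ne 𝒜 hmem (Ne.symm hτ)]
        by_cases hex : ∃ β : Γ, α + β = τ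
        · obtain ⟨β, hβ⟩ := hex
          rw [hcompL_eq_decompose hβ,
            DirectSum.decompose_of_mem_ne 𝒜 m.2 (fun hc => hτ (by rw [← hβ, hc])), mul_zero]
        · unfold hcompL
          rw [dif_neg hex, mul_zero]
  | add m m' hm hm' =>
      have hL : hcompL 𝒜 α τ (m + m') = hcompL 𝒜 α τ m + hcompL 𝒜 α τ m' := by
        unfold hcompL; split
        · rw [DirectSum.decompose_add, DirectSum.add_apply, AddSubgroup.coe_add]
        · simp
      rw [mul_add, DirectSum.decompose_add, DirectSum.add_apply, AddSubgroup.coe_add, hm, hm',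
        hL, mul_add]

end

section
variable {Γ : Type*} [AddCancelMonoid Γ] [DecidableEq Γ]
variable {A : Type*} [Ring A] (𝒜 : Γ → AddSubgroup A) [GradedRing 𝒜]

variable {𝒜}

/-- The homogeneous components of an element of the maximal graded ideal stay in it. -/
lemma decompose_mem_maximalGradedIdeal {m : A} (hm : m ∈ maximalGradedIdeal 𝒜) (γ : Γ) :
    (DirectSum.decompose 𝒜 m γ : A) ∈ maximalGradedIdeal 𝒜 := by
  set 𝔐 := maximalGradedIdeal 𝒜 with h𝔐
  let I : TwoSidedIdeal A := TwoSidedIdeal.mk'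
    {a : A | ∀ γ : Γ, (DirectSum.decompose 𝒜 a γ : A) ∈ 𝔐}
    (fun γ => by rw [DirectSum.decompose_zero]; simpa using zero_mem 𝔐)
    (fun {a b} ha hb γ => by
      rw [DirectSum.decompose_add, DirectSum.add_apply, AddSubgroup.coe_add]
      exact add_mem (ha γ) (hb γ))
    (fun {a} ha γ => by
      rw [DirectSum.decompose_neg, DFinsupp.neg_apply, AddSubgroup.coe_neg]
      exact neg_mem (ha γ))
    (fun {x y} hy γ => by
      induction x using DirectSum.Decomposition.inductionOn 𝒜 with
      | zero => rw [zero_mul, DirectSum.decompose_zero]; simpa using zero_mem 𝔐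
      | @homogeneous α₀ x =>
          rw [decompose_homog_mul x.2]
          refine TwoSidedIdeal.mul_mem_left _ _ _ ?_
          unfold hcompL
          split
          · exact hy _
          · exact zero_mem 𝔐
      | add x x' hx hx' =>
          rw [add_mul, DirectSum.decompose_add, DirectSum.add_apply, AddSubgroup.coe_add]
          exact add_mem hx hx')
    (fun {x y} hx γ => by
      induction y using DirectSum.Decomposition.inductionOn 𝒜 with
      | zero => rw [mul_zero, DirectSum.decompose_zero]; simpa using zero_mem 𝔐
      | @homogeneous β₀ y =>
          rw [decompose_mul_eq_hcomp_mul x y.2]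
          refine TwoSidedIdeal.mul_mem_right _ _ _ ?_
          unfold hcomp
          split
          · exact hx _
          · exact zero_mem 𝔐
      | add y y' hy hy' =>
          rw [mul_add, DirectSum.decompose_add, DirectSum.add_apply, AddSubgroup.coe_add]
          exact add_mem hy hy')
  have hMI : 𝔐 ≤ I := by
    rw [h𝔐, maximalGradedIdeal]
    intro z hz
    rw [TwoSidedIdeal.mem_span_iff] at hz
    refine hz I ?_
    rintro a ⟨⟨ha0, ⟨σ, hσ⟩⟩, hau⟩
    rw [SetLike.mem_coe, TwoSidedIdeal.mem_mk']
    intro γ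
    by_cases hγ : γ = σ
    · subst hγ
      rw [DirectSum.decompose_of_mem_same 𝒜 hσ]
      exact TwoSidedIdeal.subset_span ⟨⟨ha0, ⟨γ, hσ⟩⟩, hau⟩
    · rw [DirectSum.decompose_of_mem_ne 𝒜 hσ (Ne.symm hγ)]
      exact zero_mem 𝔐
  have := hMI hm
  rw [TwoSidedIdeal.mem_mk'] at this
  exact this γ

/-- Units cannot lie in a proper two-sided ideal; and 1 - (degree-0 elt of 𝔐) is a unit. -/
lemma isUnit_one_sub_of_mem (hloc : maximalGradedIdeal 𝒜 ≠ ⊤) {c : A}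
    (hc0 : c ∈ 𝒜 (0 : Γ)) (hcM : c ∈ maximalGradedIdeal 𝒜) : IsUnit (1 - c) := by
  by_contra hns
  have hc1 : c ≠ 1 := fun h => hloc (TwoSidedIdeal.one_mem_iff _ |>.mp (h ▸ hcM))
  have h1c : (1 : A) - c ∈ maximalGradedIdeal 𝒜 := by
    refine TwoSidedIdeal.subset_span ⟨⟨?_, ⟨0, sub_mem (SetLike.one_mem_graded 𝒜) hc0⟩⟩, hns⟩
    intro h
    exact hc1 (sub_eq_zero.mp h).symm
  exact hloc (TwoSidedIdeal.one_mem_iff _ |>.mp (by simpa using add_mem hcM h1c))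
end

section
variable {Γ : Type*} [AddCancelMonoid Γ] [DecidableEq Γ]
variable {A : Type*} [Ring A] {𝒜 : Γ → AddSubgroup A} [GradedRing 𝒜]
variable {P : Type*} [AddCommGroup P] [Module A P] {𝓟 : Γ → AddSubgroup P}
  [SetLike.GradedSMul 𝒜 𝓟] [DirectSum.Decomposition 𝓟]

lemma core_linearIndependent (hloc : maximalGradedIdeal 𝒜 ≠ ⊤)
    (hproj : Module.Projective A P) (s : ℕ) (ξ : Fin s → P)
    (hinj : Function.Injective ξ)
    (hhom : ∀ i : Fin s, ξ i ≠ 0 ∧ ∃ γ : Γ, ξ i ∈ 𝓟 γ)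
    (hspan : Submodule.span A (Set.range ξ) = ⊤)
    (hmin : ∀ T ⊂ Set.range ξ, Submodule.span A T ≠ ⊤) :
    LinearIndependent A ξ := by
  classical
  choose hne δ hδ using hhom
  set 𝔐 := maximalGradedIdeal 𝒜 with h𝔐
  -- the canonical surjection from the free module
  let π : (Fin s → A) →ₗ[A] P :=
    { toFun := fun a => ∑ i, a i • ξ i
      map_add' := fun a b => by
        simp only [Pi.add_apply, add_smul, Finset.sum_add_distrib]
      map_smul' := fun c a => by
        simp only [Pi.smul_apply, smul_eq_mul, RingHom.id_apply, Finset.smul_sum, mul_smul] }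
  have hπ : ∀ a, π a = ∑ i, a i • ξ i := fun a => rfl
  have hπsurj : Function.Surjective π := by
    intro p
    have hp : p ∈ Submodule.span A (Set.range ξ) := hspan ▸ Submodule.mem_top
    exact (Submodule.mem_span_range_iff_exists_fun A).mp hp
  obtain ⟨σ, hσ⟩ := Module.projective_lifting_property π LinearMap.id hπsurj
  have hσ' : ∀ p, π (σ p) = p := fun p => by
    have := congrArg (fun f : P →ₗ[A] P => f p) hσ
    simpa using this
  -- no relation can have a unit coefficient (uses minimality)
  have hu : ∀ (b : Fin s → A) (i₀ : Fin s), (∑ i, b i • ξ i) = 0 → ¬ IsUnit (b i₀) := by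
    intro b i₀ hrel hb
    obtain ⟨u, huu⟩ := hb
    set T : Set P := Set.range ξ \ {ξ i₀} with hT
    have hT1 : T ⊂ Set.range ξ := by
      constructor
      · exact Set.diff_subset
      · intro hsub
        exact (hsub ⟨i₀, rfl⟩).2 rfl
    refine hmin T hT1 ?_
    rw [eq_top_iff, ← hspan, Submodule.span_le]
    rintro _ ⟨j, rfl⟩
    by_cases hj : j = i₀
    · subst hj
      have h2 := Finset.add_sum_erase Finset.univ (fun i => b i • ξ i) (Finset.mem_univ j)
      rw [hrel] at h2
      have hsum : b j • ξ j = - ∑ i ∈ Finset.univ.erase j, b i • ξ i :=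
        eq_neg_of_add_eq_zero_left h2
      have hξ : ξ j = ((u⁻¹ : Aˣ) : A) • (b j • ξ j) := by
        rw [smul_smul, ← huu, Units.inv_mul, one_smul]
      rw [hξ, hsum]
      refine Submodule.smul_mem _ _ (Submodule.neg_mem _ (Submodule.sum_mem _ ?_))
      intro i hi
      refine Submodule.smul_mem _ _ (Submodule.subset_span ?_)
      exact ⟨⟨i, rfl⟩, fun h => (Finset.mem_erase.mp hi).1 (hinj h)⟩
    · exact Submodule.subset_span ⟨⟨j, rfl⟩, fun h => hj (hinj h)⟩
  -- homogeneous relations have coefficients in 𝔐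
  have hrelM : ∀ b : Fin s → A, (∀ i, ∃ γ, b i ∈ 𝒜 γ) → (∑ i, b i • ξ i) = 0 →
      ∀ i, b i ∈ 𝔐 := by
    intro b hb hrel i
    rcases eq_or_ne (b i) 0 with h0 | h0
    · rw [h0]; exact zero_mem _
    · obtain ⟨γ, hγ⟩ := hb i
      exact TwoSidedIdeal.subset_span ⟨⟨h0, ⟨γ, hγ⟩⟩, hu b i hrel⟩
  -- the component maps
  have f_pi : ∀ (μ : Γ) (a : Fin s → A),
      π (fun i => hcomp 𝒜 (δ i) μ (a i)) = (DirectSum.decompose 𝓟 (π a) μ : P) := by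
    intro μ a
    rw [hπ, hπ]
    calc (∑ i, hcomp 𝒜 (δ i) μ (a i) • ξ i)
        = ∑ i, (DirectSum.decompose 𝓟 (a i • ξ i) μ : P) := by
          refine Finset.sum_congr rfl fun i _ => ?_
          rw [decompose_smul_eq_hcomp_smul (𝒜 := 𝒜) (a i) (hδ i) μ]
      _ = (DirectSum.decompose 𝓟 (∑ i, a i • ξ i) μ : P) := by
          rw [DirectSum.decompose_sum, DFinsupp.finset_sum_apply,
            AddSubmonoidClass.coe_finset_sum]
  have f_sum : ∀ a : Fin s → A, ∃ T : Finset Γ,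
      ∑ μ ∈ T, (fun i => hcomp 𝒜 (δ i) μ (a i)) = a := by
    intro a
    refine ⟨Finset.univ.biUnion
      (fun i => (DirectSum.decompose 𝒜 (a i)).support.image (· + δ i)), ?_⟩
    funext i
    rw [Finset.sum_apply]
    set Ti := (DirectSum.decompose 𝒜 (a i)).support.image (· + δ i) with hTi
    have hsub : Ti ⊆ Finset.univ.biUnion
        (fun i => (DirectSum.decompose 𝒜 (a i)).support.image (· + δ i)) :=
      hTi ▸ Finset.subset_biUnion_of_mem
        (fun i => (DirectSum.decompose 𝒜 (a i)).support.image (· + δ i)) (Finset.mem_univ i)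
    rw [← Finset.sum_subset hsub ?_]
    · rw [hTi, Finset.sum_image (fun γ _ γ' _ h => add_right_cancel h)]
      calc ∑ γ ∈ (DirectSum.decompose 𝒜 (a i)).support, hcomp 𝒜 (δ i) (γ + δ i) (a i)
          = ∑ γ ∈ (DirectSum.decompose 𝒜 (a i)).support, (DirectSum.decompose 𝒜 (a i) γ : A) :=
            Finset.sum_congr rfl fun γ _ => hcomp_eq_decompose rfl (a i)
        _ = a i := DirectSum.sum_support_decompose 𝒜 (a i)
    · intro μ _ hns
      show hcomp 𝒜 (δ i) μ (a i) = 0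
      by_cases hex : ∃ γ : Γ, γ + δ i = μ
      · obtain ⟨γ, hγ⟩ := hex
        rw [hcomp_eq_decompose hγ]
        have hγns : γ ∉ (DirectSum.decompose 𝒜 (a i)).support := by
          intro hmem
          exact hns (hTi ▸ Finset.mem_image.mpr ⟨γ, hmem, hγ⟩)
        rw [DFinsupp.notMem_support_iff.mp hγns]
        rfl
      · exact hcomp_of_not_exists hex (a i)
  have f_hom : ∀ (μ : Γ) (a : Fin s → A) (i : Fin s),
      hcomp 𝒜 (δ i) μ (a i) = 0 ∨
        ∃ γ, γ + δ i = μ ∧ hcomp 𝒜 (δ i) μ (a i) ∈ 𝒜 γ := by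
    intro μ a i
    by_cases hex : ∃ γ : Γ, γ + δ i = μ
    · obtain ⟨γ, hγ⟩ := hex
      right
      exact ⟨γ, hγ, by rw [hcomp_eq_decompose hγ]; exact SetLike.coe_mem _⟩
    · left; exact hcomp_of_not_exists hex (a i)
  have f_id : ∀ (μ : Γ) (v : Fin s → A),
      (∀ i, v i = 0 ∨ ∃ γ, γ + δ i = μ ∧ v i ∈ 𝒜 γ) →
      (fun i => hcomp 𝒜 (δ i) μ (v i)) = v := by
    intro μ v hv
    funext i
    rcases hv i with h0 | ⟨γ, hγ, hmem⟩
    · rw [h0, hcomp_zero]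
    · rw [hcomp_eq_decompose hγ, DirectSum.decompose_of_mem_same 𝒜 hmem]
  have c5 : ∀ (μ μ' : Γ) (m : A) (v : Fin s → A),
      (∀ i, v i = 0 ∨ ∃ γ, γ + δ i = μ ∧ v i ∈ 𝒜 γ) →
      (fun i => hcomp 𝒜 (δ i) μ' ((m • v) i)) = hcomp 𝒜 μ μ' m • v := by
    intro μ μ' m v hv
    funext i
    simp only [Pi.smul_apply, smul_eq_mul]
    rcases hv i with h0 | ⟨γi, hγ, hmem⟩
    · rw [h0, mul_zero, hcomp_zero, mul_zero]
    · by_cases hex : ∃ α : Γ, α + μ = μ'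
      · obtain ⟨α, hα⟩ := hex
        have hγ' : (α + γi) + δ i = μ' := by rw [add_assoc, hγ, hα]
        rw [hcomp_eq_decompose hγ', decompose_mul_eq_hcomp_mul m hmem,
          hcomp_eq_decompose (rfl : α + γi = α + γi), hcomp_eq_decompose hα]
      · rw [hcomp_of_not_exists hex, zero_mul]
        by_cases hex2 : ∃ γ : Γ, γ + δ i = μ'
        · obtain ⟨γ₀, hγ₀⟩ := hex2
          rw [hcomp_eq_decompose hγ₀, decompose_mul_eq_hcomp_mul m hmem,
            hcomp_of_not_exists ?_, zero_mul]
          rintro ⟨α, hα⟩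
          exact hex ⟨α, by rw [← hγ, ← add_assoc, hα, hγ₀]⟩
        · exact hcomp_of_not_exists hex2 _
  -- the kernel of π
  set K := LinearMap.ker π with hK
  let e : Fin s → (Fin s → A) := fun j => Pi.single j 1
  let κ : Fin s → (Fin s → A) := fun j => e j - σ (π (e j))
  have hκK : ∀ j, κ j ∈ K := by
    intro j
    rw [hK, LinearMap.mem_ker]
    show π (e j - σ (π (e j))) = 0
    rw [map_sub, hσ', sub_self]
  have hsingle : ∀ k : Fin s → A, ∑ j, (k j) • e j = k := by
    intro k
    funext i
    rw [Finset.sum_apply]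
    simp [e, Pi.single_apply, Finset.sum_ite_eq, mul_ite]
  have hF1 : ∀ k ∈ K, ∑ j, (k j) • κ j = k := by
    intro k hk
    have hσπ : σ (π k) = ∑ j, (k j) • σ (π (e j)) := by
      conv_lhs => rw [← hsingle k]
      rw [map_sum, map_sum]
      refine Finset.sum_congr rfl fun j _ => ?_
      rw [map_smul, map_smul]
    calc ∑ j, (k j) • κ j
        = ∑ j, ((k j) • e j - (k j) • σ (π (e j))) :=
          Finset.sum_congr rfl fun j _ => smul_sub _ _ _
      _ = (∑ j, (k j) • e j) - ∑ j, (k j) • σ (π (e j)) := Finset.sum_sub_distrib _ _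
      _ = k - σ (π k) := by rw [hsingle, hσπ]
      _ = k := by rw [LinearMap.mem_ker.mp hk, map_zero, sub_zero]
  -- all coordinates of kernel elements lie in 𝔐
  have hKM : ∀ k ∈ K, ∀ i, k i ∈ 𝔐 := by
    intro k hk i
    have hcomps : ∀ γ : Γ, (DirectSum.decompose 𝒜 (k i) γ : A) ∈ 𝔐 := by
      intro γ
      have h0 : (∑ i', (fun i' => hcomp 𝒜 (δ i') (γ + δ i) (k i')) i' • ξ i') = 0 := by
        rw [← hπ, f_pi (γ + δ i) k, LinearMap.mem_ker.mp hk, DirectSum.decompose_zero]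
        rfl
      have := hrelM _ (fun i' => ⟨_, (hcomp_mem (δ i') (γ + δ i) (k i')).choose_spec⟩) h0 i
      rwa [hcomp_eq_decompose rfl (k i)] at this
    rw [← DirectSum.sum_support_decompose 𝒜 (k i)]
    exact sum_mem fun γ _ => hcomps γ
  -- homogeneous components preserve the kernel
  have hKcm : ∀ (μ : Γ), ∀ k ∈ K, (fun i => hcomp 𝒜 (δ i) μ (k i)) ∈ K := by
    intro μ k hk
    rw [hK, LinearMap.mem_ker, f_pi μ k, LinearMap.mem_ker.mp hk, DirectSum.decompose_zero]
    rfl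
  -- the homogeneous generators of K
  let g : Fin s × Γ → (Fin s → A) := fun p => fun i => hcomp 𝒜 (δ i) p.2 (κ p.1 i)
  have hgK : ∀ p, g p ∈ K := fun p => hKcm p.2 (κ p.1) (hκK p.1)
  have hgHom : ∀ p : Fin s × Γ, ∀ i, g p i = 0 ∨ ∃ γ, γ + δ i = p.2 ∧ g p i ∈ 𝒜 γ :=
    fun p i => f_hom p.2 (κ p.1) i
  have hgen : ∃ I : Finset (Fin s × Γ), Submodule.span A (g '' ↑I) = K := by
    choose T hT using f_sum
    refine ⟨Finset.univ.biUnion (fun j => (T (κ j)).image (fun μ => (j, μ))), le_antisymm ?_ ?_⟩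
    · rw [Submodule.span_le]
      rintro _ ⟨p, _, rfl⟩
      exact hgK p
    · intro k hk
      rw [← hF1 k hk]
      refine Submodule.sum_mem _ fun j _ => Submodule.smul_mem _ _ ?_
      rw [← hT (κ j)]
      refine Submodule.sum_mem _ fun μ hμ => Submodule.subset_span ?_
      refine ⟨(j, μ), ?_, rfl⟩
      rw [Finset.mem_coe, Finset.mem_biUnion]
      exact ⟨j, Finset.mem_univ j, Finset.mem_image.mpr ⟨μ, hμ, rfl⟩⟩
  have hexists : ∃ n : ℕ, ∃ I : Finset (Fin s × Γ),
      I.card = n ∧ Submodule.span A (g '' ↑I) = K := by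
    obtain ⟨I, hI⟩ := hgen
    exact ⟨I.card, I, rfl, hI⟩
  obtain ⟨I₀, hcard, hI₀⟩ := Nat.find_spec hexists
  have hempty : I₀ = ∅ := by
    by_contra hne'
    obtain ⟨p₀, hp₀⟩ := Finset.nonempty_iff_ne_empty.mpr hne'
    set η := g p₀ with hηdef
    have hηK : η ∈ K := hgK p₀
    -- write each κ j in terms of the generators indexed by I₀
    have hκspan : ∀ j, ∃ c : {x // x ∈ I₀} → A, ∑ p : {x // x ∈ I₀}, c p • g ↑p = κ j := by
      intro j
      have hr : Set.range (fun p : {x // x ∈ I₀} => g ↑p) = g '' ↑I₀ := by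
        rw [show (fun p : {x // x ∈ I₀} => g ↑p) = g ∘ (Subtype.val) from rfl, Set.range_comp,
          Subtype.range_coe]
      have : κ j ∈ Submodule.span A (Set.range (fun p : {x // x ∈ I₀} => g ↑p)) := by
        rw [hr, hI₀]
        exact hκK j
      exact (Submodule.mem_span_range_iff_exists_fun A).mp this
    choose c hc using hκspan
    set mcoef : {x // x ∈ I₀} → A := fun p => ∑ j, η j * c j p with hmcoef
    have hmM : ∀ p, mcoef p ∈ 𝔐 := fun p => sum_mem fun j _ =>
      TwoSidedIdeal.mul_mem_right _ _ _ (hKM η hηK j)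
    have hη : η = ∑ p : {x // x ∈ I₀}, mcoef p • g ↑p := by
      calc η = ∑ j, (η j) • κ j := (hF1 η hηK).symm
        _ = ∑ j, (η j) • ∑ p : {x // x ∈ I₀}, c j p • g ↑p :=
            Finset.sum_congr rfl fun j _ => by rw [hc j]
        _ = ∑ j, ∑ p : {x // x ∈ I₀}, (η j * c j p) • g ↑p := by
            refine Finset.sum_congr rfl fun j _ => ?_
            rw [Finset.smul_sum]
            exact Finset.sum_congr rfl fun p _ => by rw [mul_smul]
        _ = ∑ p : {x // x ∈ I₀}, ∑ j, (η j * c j p) • g ↑p := Finset.sum_comm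
        _ = ∑ p : {x // x ∈ I₀}, mcoef p • g ↑p :=
            Finset.sum_congr rfl fun p _ => by rw [hmcoef]; exact (Finset.sum_smul).symm
    -- take the degree-p₀.2 component of this identity
    have hηeq : η = ∑ p : {x // x ∈ I₀},
        hcomp 𝒜 (↑p : Fin s × Γ).2 p₀.2 (mcoef p) • g ↑p := by
      calc η = (fun i => hcomp 𝒜 (δ i) p₀.2 (η i)) := (f_id p₀.2 η (hgHom p₀)).symm
        _ = (fun i => hcomp 𝒜 (δ i) p₀.2 ((∑ p : {x // x ∈ I₀}, mcoef p • g ↑p) i)) := by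
            rw [← hη]
        _ = ∑ p : {x // x ∈ I₀}, (fun i => hcomp 𝒜 (δ i) p₀.2 ((mcoef p • g ↑p) i)) := by
            funext i
            show hcomp 𝒜 (δ i) p₀.2 ((∑ p : {x // x ∈ I₀}, mcoef p • g ↑p) i)
              = (∑ p : {x // x ∈ I₀}, (fun i => hcomp 𝒜 (δ i) p₀.2 ((mcoef p • g ↑p) i))) i
            rw [Finset.sum_apply, Finset.sum_apply]
            exact hcomp_sum _ _ _ _
        _ = ∑ p : {x // x ∈ I₀}, hcomp 𝒜 (↑p : Fin s × Γ).2 p₀.2 (mcoef p) • g ↑p :=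
            Finset.sum_congr rfl fun p _ =>
              c5 (↑p : Fin s × Γ).2 p₀.2 (mcoef p) (g ↑p) (hgHom ↑p)
    set c₀ : A := hcomp 𝒜 p₀.2 p₀.2 (mcoef ⟨p₀, hp₀⟩) with hc₀
    have hc₀M : c₀ ∈ 𝔐 := by
      rw [hc₀, hcomp_eq_decompose (zero_add p₀.2)]
      exact decompose_mem_maximalGradedIdeal (hmM _) 0
    have hc₀0 : c₀ ∈ 𝒜 (0 : Γ) := by
      rw [hc₀, hcomp_eq_decompose (zero_add p₀.2)]
      exact SetLike.coe_mem _
    have hsplit : (1 - c₀) • η = ∑ p ∈ Finset.univ.erase (⟨p₀, hp₀⟩ : {x // x ∈ I₀}),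
        hcomp 𝒜 (↑p : Fin s × Γ).2 p₀.2 (mcoef p) • g ↑p := by
      have h1 := Finset.add_sum_erase Finset.univ
        (fun p : {x // x ∈ I₀} => hcomp 𝒜 (↑p : Fin s × Γ).2 p₀.2 (mcoef p) • g ↑p)
        (Finset.mem_univ (⟨p₀, hp₀⟩ : {x // x ∈ I₀}))
      have h2 : c₀ • η + ∑ p ∈ Finset.univ.erase (⟨p₀, hp₀⟩ : {x // x ∈ I₀}),
          hcomp 𝒜 (↑p : Fin s × Γ).2 p₀.2 (mcoef p) • g ↑p = η := h1.trans hηeq.symm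
      rw [sub_smul, one_smul, ← (eq_sub_of_add_eq' h2)]
    have hunit : IsUnit (1 - c₀) := isUnit_one_sub_of_mem hloc hc₀0 hc₀M
    obtain ⟨u, hu'⟩ := hunit
    have hηmem : η ∈ Submodule.span A (g '' ↑(I₀.erase p₀)) := by
      have hS : (∑ p ∈ Finset.univ.erase (⟨p₀, hp₀⟩ : {x // x ∈ I₀}),
          hcomp 𝒜 (↑p : Fin s × Γ).2 p₀.2 (mcoef p) • g ↑p) ∈
          Submodule.span A (g '' ↑(I₀.erase p₀)) := by
        refine Submodule.sum_mem _ fun p hp => Submodule.smul_mem _ _ (Submodule.subset_span ?_)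
        refine ⟨↑p, ?_, rfl⟩
        rw [Finset.mem_coe, Finset.mem_erase]
        exact ⟨fun h => (Finset.mem_erase.mp hp).1 (Subtype.ext h), p.2⟩
      have hinv : η = ((u⁻¹ : Aˣ) : A) • ((1 - c₀) • η) := by
        rw [smul_smul, ← hu', Units.inv_mul, one_smul]
      rw [hinv, hsplit]
      exact Submodule.smul_mem _ _ hS
    have hspan_erase : Submodule.span A (g '' ↑(I₀.erase p₀)) = K := by
      refine le_antisymm ?_ ?_
      · rw [← hI₀]
        refine Submodule.span_mono (Set.image_mono ?_)
        intro x hx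
        rw [Finset.mem_coe] at hx ⊢
        exact Finset.erase_subset _ _ hx
      · rw [← hI₀, Submodule.span_le]
        rintro _ ⟨p, hp, rfl⟩
        by_cases hpp : p = p₀
        · subst hpp
          exact hηmem
        · refine Submodule.subset_span ⟨p, ?_, rfl⟩
          rw [Finset.mem_coe] at hp ⊢
          exact Finset.mem_erase.mpr ⟨hpp, hp⟩
    have hlt : (I₀.erase p₀).card < Nat.find hexists := by
      rw [← hcard]
      exact Finset.card_erase_lt_of_mem hp₀
    exact Nat.find_min hexists hlt ⟨I₀.erase p₀, rfl, hspan_erase⟩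
  have hK0 : K = ⊥ := by
    rw [hempty] at hI₀
    rw [← hI₀]
    simp
  rw [Fintype.linearIndependent_iff]
  intro cc hcrel i
  have hcK : cc ∈ K := by
    rw [hK, LinearMap.mem_ker, hπ]
    exact hcrel
  rw [hK0, Submodule.mem_bot] at hcK
  rw [hcK]
  rfl
end

section
variable {Γ : Type*} [AddCancelMonoid Γ] [DecidableEq Γ]
variable {A : Type*} [Ring A] (𝒜 : Γ → AddSubgroup A) [GradedRing 𝒜]

theorem gr_projective_is_free_aux
    (hloc : maximalGradedIdeal 𝒜 ≠ ⊤)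
    {P : Type*} [AddCommGroup P] [Module A P] [Module.Finite A P]
    (𝓟 : Γ → AddSubgroup P) [SetLike.GradedSMul 𝒜 𝓟] [DirectSum.Decomposition 𝓟]
    (hproj : Module.Projective A P) :
    Module.Free A P ∧
      ∀ (s : ℕ) (ξ : Fin s → P), Function.Injective ξ →
        (∀ i : Fin s, ξ i ≠ 0 ∧ ∃ γ : Γ, ξ i ∈ 𝓟 γ) →
        Submodule.span A (Set.range ξ) = ⊤ →
        (∀ T ⊂ Set.range ξ, Submodule.span A T ≠ ⊤) →
        LinearIndependent A ξ ∧ Submodule.span A (Set.range ξ) = ⊤ := by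
  classical
  have part2 : ∀ (s : ℕ) (ξ : Fin s → P), Function.Injective ξ →
      (∀ i : Fin s, ξ i ≠ 0 ∧ ∃ γ : Γ, ξ i ∈ 𝓟 γ) →
      Submodule.span A (Set.range ξ) = ⊤ →
      (∀ T ⊂ Set.range ξ, Submodule.span A T ≠ ⊤) →
      LinearIndependent A ξ ∧ Submodule.span A (Set.range ξ) = ⊤ :=
    fun s ξ hinj hhom hspan hmin =>
      ⟨core_linearIndependent hloc hproj s ξ hinj hhom hspan hmin, hspan⟩
  refine ⟨?_, part2⟩
  -- construct a minimal homogeneous generating set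
  obtain ⟨S, hS⟩ := Module.Finite.fg_top (R := A) (M := P)
  set H : Finset P := S.biUnion (fun x => (DirectSum.decompose 𝓟 x).support.image
      (fun γ => (DirectSum.decompose 𝓟 x γ : P))) with hH
  have hHhom : ∀ p ∈ H, p ≠ 0 ∧ ∃ γ, p ∈ 𝓟 γ := by
    intro p hp
    rw [hH, Finset.mem_biUnion] at hp
    obtain ⟨x, hx, hp⟩ := hp
    rw [Finset.mem_image] at hp
    obtain ⟨γ, hγ, rfl⟩ := hp
    rw [DFinsupp.mem_support_iff] at hγ
    exact ⟨fun h => hγ (Subtype.ext h), γ, SetLike.coe_mem _⟩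
  have hHspan : Submodule.span A (↑H : Set P) = ⊤ := by
    rw [eq_top_iff, ← hS, Submodule.span_le]
    intro x hx
    rw [SetLike.mem_coe, ← DirectSum.sum_support_decompose 𝓟 x]
    refine Submodule.sum_mem _ fun γ hγ => Submodule.subset_span ?_
    rw [Finset.mem_coe, hH, Finset.mem_biUnion]
    exact ⟨x, hx, Finset.mem_image.mpr ⟨γ, hγ, rfl⟩⟩
  have hexists : ∃ n : ℕ, ∃ Ω : Finset P,
      Ω.card = n ∧ Ω ⊆ H ∧ Submodule.span A (↑Ω : Set P) = ⊤ :=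
    ⟨H.card, H, rfl, Finset.Subset.refl H, hHspan⟩
  obtain ⟨Ω, hΩcard, hΩsub, hΩspan⟩ := Nat.find_spec hexists
  set s := Ω.card with hs
  set ξ : Fin s → P := fun i => ((Ω.equivFin.symm i : {x // x ∈ Ω}) : P) with hξ
  have hinj : Function.Injective ξ :=
    Subtype.val_injective.comp (Ω.equivFin.symm.injective)
  have hrange : Set.range ξ = (↑Ω : Set P) := by
    rw [hξ, show (fun i => ((Ω.equivFin.symm i : {x // x ∈ Ω}) : P))
        = Subtype.val ∘ (Ω.equivFin.symm) from rfl, Set.range_comp,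
      Equiv.range_eq_univ, Set.image_univ, Subtype.range_coe]
  have hhom : ∀ i : Fin s, ξ i ≠ 0 ∧ ∃ γ, ξ i ∈ 𝓟 γ := by
    intro i
    exact hHhom _ (hΩsub (Ω.equivFin.symm i).2)
  have hspan : Submodule.span A (Set.range ξ) = ⊤ := by rw [hrange]; exact hΩspan
  have hmin : ∀ T ⊂ Set.range ξ, Submodule.span A T ≠ ⊤ := by
    intro T hT hTspan
    rw [hrange] at hT
    have hfin : T.Finite := Set.Finite.subset (Ω.finite_toSet) hT.subset
    have hsub' : hfin.toFinset ⊆ Ω := by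
      intro x hx
      rw [Set.Finite.mem_toFinset] at hx
      exact Finset.mem_coe.mp (hT.subset hx)
    have hne : hfin.toFinset ≠ Ω := by
      intro h
      exact hT.ne (by rw [← hfin.coe_toFinset, h])
    have hlt : hfin.toFinset.card < Nat.find hexists := by
      rw [← hΩcard]
      exact Finset.card_lt_card (lt_of_le_of_ne hsub' hne)
    exact Nat.find_min hexists hlt
      ⟨hfin.toFinset, rfl, hsub'.trans hΩsub, by rw [hfin.coe_toFinset]; exact hTspan⟩
  obtain ⟨hli, -⟩ := part2 s ξ hinj hhom hspan hmin
  exact Module.Free.of_basis (Module.Basis.mk hli (by rw [hspan]))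
end

section

variable {Γ : Type*} [AddCancelMonoid Γ] [DecidableEq Γ]
variable {A : Type*} [Ring A] (𝒜 : Γ → AddSubgroup A) [GradedRing 𝒜]

/-- **Theorem 4.6.**  Let `Γ` be a cancellation monoid (written additively), `A` a
`Γ`-graded local ring (the graded local condition being that the maximal graded ideal
`𝔐` is proper), and `P` a finitely generated `Γ`-graded `A`-module which is projective
as an ungraded `A`-module.  Then `P` is a free `A`-module; indeed, any minimal
homogeneous generating set `Ω = {ξ₁, …, ξ_s}` of `P` is a free `A`-basis of `P` (it is
`A`-linearly independent and spans `P`). -/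
theorem gr_projective_is_free
    (hloc : maximalGradedIdeal 𝒜 ≠ ⊤)
    {P : Type*} [AddCommGroup P] [Module A P] [Module.Finite A P]
    (𝓟 : Γ → AddSubgroup P) [SetLike.GradedSMul 𝒜 𝓟] [DirectSum.Decomposition 𝓟]
    (hproj : Module.Projective A P) :
    Module.Free A P ∧
      ∀ (s : ℕ) (ξ : Fin s → P), Function.Injective ξ →
        (∀ i : Fin s, ξ i ≠ 0 ∧ ∃ γ : Γ, ξ i ∈ 𝓟 γ) →
        Submodule.span A (Set.range ξ) = ⊤ →
        (∀ T ⊂ Set.range ξ, Submodule.span A T ≠ ⊤) →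
        LinearIndependent A ξ ∧ Submodule.span A (Set.range ξ) = ⊤ := by
  exact gr_projective_is_free_aux 𝒜 hloc 𝓟 hproj

end
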